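/- arXiv:1312.3581 — 3 statements merged into one kernel-verified Lean document; each statement's English description precedes it below -/
import Mathlib

section
/- In any Lie ring, for all elements x, y one has 0 = ⁅⁅x,⁅x,y⁆⁆, ⁅y,⁅x,y⁆⁆⁆ − ⁅⁅x,y⁆, ⁅x,⁅y,⁅x,y⁆⁆⁆⁆ − ⁅y,⁅y,⁅x,⁅x,⁅x,y⁆⁆⁆⁆⁆ + ⁅y,⁅x,⁅x,⁅y,⁅x,y⁆⁆⁆⁆⁆. -/
/-- In any Lie ring, for all elements `x, y` one has
`0 = ⁅⁅x,⁅x,y⁆⁆, ⁅y,⁅x,y⁆⁆⁆ − ⁅⁅x,y⁆, ⁅x,⁅y,⁅x,y⁆⁆⁆⁆ − ⁅y,⁅y,⁅x,⁅x,⁅x,y⁆⁆⁆⁆⁆ +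
⁅y,⁅x,⁅x,⁅y,⁅x,y⁆⁆⁆⁆⁆`, a consequence of the Jacobi identity, valid in particular
in any free Lie algebra. -/
theorem free_lie_identity_one {L : Type*} [LieRing L] (x y : L) :
    0 = ⁅⁅x, ⁅x, y⁆⁆, ⁅y, ⁅x, y⁆⁆⁆ - ⁅⁅x, y⁆, ⁅x, ⁅y, ⁅x, y⁆⁆⁆⁆
        - ⁅y, ⁅y, ⁅x, ⁅x, ⁅x, y⁆⁆⁆⁆⁆ + ⁅y, ⁅x, ⁅x, ⁅y, ⁅x, y⁆⁆⁆⁆⁆ := by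
  have hw : ⁅x, ⁅y, ⁅x, y⁆⁆⁆ = ⁅y, ⁅x, ⁅x, y⁆⁆⁆ := by
    rw [leibniz_lie, lie_self, zero_add]
  have h2 : ⁅y, ⁅x, ⁅x, ⁅x, y⁆⁆⁆⁆
      = ⁅x, ⁅y, ⁅x, ⁅x, y⁆⁆⁆⁆ - ⁅⁅x, y⁆, ⁅x, ⁅x, y⁆⁆⁆ :=
    eq_sub_of_add_eq' (leibniz_lie x y ⁅x, ⁅x, y⁆⁆).symm
  have h3 : ⁅y, ⁅⁅x, y⁆, ⁅x, ⁅x, y⁆⁆⁆⁆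
      = ⁅⁅y, ⁅x, y⁆⁆, ⁅x, ⁅x, y⁆⁆⁆ + ⁅⁅x, y⁆, ⁅y, ⁅x, ⁅x, y⁆⁆⁆⁆ :=
    leibniz_lie y ⁅x, y⁆ ⁅x, ⁅x, y⁆⁆
  have h4 : ⁅⁅x, ⁅x, y⁆⁆, ⁅y, ⁅x, y⁆⁆⁆ = -⁅⁅y, ⁅x, y⁆⁆, ⁅x, ⁅x, y⁆⁆⁆ :=
    (lie_skew _ _).symm
  rw [hw, h2, lie_sub, h3, h4]
  abel
end

section
/- In any Lie ring, for all elements x, y one has 0 = ⁅⁅x,⁅x,y⁆⁆, ⁅y,⁅x,y⁆⁆⁆ + ⁅⁅x,y⁆, ⁅x,⁅y,⁅x,y⁆⁆⁆⁆ + ⁅x,⁅y,⁅x,⁅y,⁅x,y⁆⁆⁆⁆⁆ − ⁅x,⁅x,⁅y,⁅y,⁅x,y⁆⁆⁆⁆⁆. -/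
/-- In any Lie ring, for all elements `x, y` one has
`0 = ⁅⁅x,⁅x,y⁆⁆, ⁅y,⁅x,y⁆⁆⁆ + ⁅⁅x,y⁆, ⁅x,⁅y,⁅x,y⁆⁆⁆⁆ + ⁅x,⁅y,⁅x,⁅y,⁅x,y⁆⁆⁆⁆⁆ −
⁅x,⁅x,⁅y,⁅y,⁅x,y⁆⁆⁆⁆⁆`, a consequence of the Jacobi identity, valid in particular
in any free Lie algebra. -/
theorem free_lie_identity_two {L : Type*} [LieRing L] (x y : L) :
    0 = ⁅⁅x, ⁅x, y⁆⁆, ⁅y, ⁅x, y⁆⁆⁆ + ⁅⁅x, y⁆, ⁅x, ⁅y, ⁅x, y⁆⁆⁆⁆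
        + ⁅x, ⁅y, ⁅x, ⁅y, ⁅x, y⁆⁆⁆⁆⁆ - ⁅x, ⁅x, ⁅y, ⁅y, ⁅x, y⁆⁆⁆⁆⁆ := by
  simp only [lie_lie, lie_sub, sub_lie]
  abel
end

section
/- Let φ : ℝ³ → ℝ be C². Then for every C² function f : ℝ³ → ℂ one has i·(L(L̄ f) − L̄(L f)) = ℓ · f_u, where ℓ : ℝ³ → ℂ is the function ℓ = [ 2 φ_{z z̄} (1 + φ_u²) − 2 i φ_{z̄} φ_{z u} − 2 φ_{z̄} φ_{z u} φ_u + 2 i φ_z φ_{z̄ u} + 2 φ_z φ_{z̄} φ_{u u} − 2 φ_z φ_{z̄ u} φ_u ] / (1 + φ_u²)², and moreover ℓ is real-valued (ℓ = conj ℓ). Here φ_{z u} := (φ_z)_u, φ_{z̄ u} := (φ_{z̄})_u, φ_{z z̄} := (φ_z)_{z̄}. -/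
noncomputable section
open Complex ComplexConjugate

/-- Points of `ℝ³`, with coordinates `(x, y, u)` and `z = x + i y`. -/
abbrev V3 := Fin 3 → ℝ

/-- Partial derivative in the `j`-th coordinate direction. -/
def pd (j : Fin 3) (f : V3 → ℂ) : V3 → ℂ := fun p => fderiv ℝ f p (Pi.single j 1)

/-- Wirtinger derivative `f_z := (f_x − i f_y)/2`. -/
def wz (f : V3 → ℂ) : V3 → ℂ := fun p => (pd 0 f p - I * pd 1 f p) / 2

/-- Wirtinger derivative `f_z̄ := (f_x + i f_y)/2`. -/
def wzb (f : V3 → ℂ) : V3 → ℂ := fun p => (pd 0 f p + I * pd 1 f p) / 2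

/-- Partial derivative `f_u`. -/
def du (f : V3 → ℂ) : V3 → ℂ := pd 2 f

/-- Complexification of a real-valued function. -/
def cl (φ : V3 → ℝ) : V3 → ℂ := fun p => (φ p : ℂ)

/-- The coefficient `A := −φ_z/(i + φ_u)`. -/
def Afun (φ : V3 → ℝ) : V3 → ℂ := fun p => -(wz (cl φ) p) / (I + du (cl φ) p)

/-- The operator `L f := f_z + A·f_u`. -/
def Lop (φ : V3 → ℝ) (f : V3 → ℂ) : V3 → ℂ := fun p => wz f p + Afun φ p * du f p

/-- The conjugate operator `L̄ f := f_z̄ + Ā·f_u`. -/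
def Lbop (φ : V3 → ℝ) (f : V3 → ℂ) : V3 → ℂ :=
  fun p => wzb f p + conj (Afun φ p) * du f p

/-- The coefficient-function `ℓ` of `T = i[L, L̄]`. -/
def ell (φ : V3 → ℝ) : V3 → ℂ := fun p =>
  (2 * wzb (wz (cl φ)) p * (1 + du (cl φ) p ^ 2)
      - 2 * I * wzb (cl φ) p * du (wz (cl φ)) p
      - 2 * wzb (cl φ) p * du (wz (cl φ)) p * du (cl φ) p
      + 2 * I * wz (cl φ) p * du (wzb (cl φ)) p
      + 2 * wz (cl φ) p * wzb (cl φ) p * du (du (cl φ)) p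
      - 2 * wz (cl φ) p * du (wzb (cl φ)) p * du (cl φ) p)
    / (1 + du (cl φ) p ^ 2) ^ 2

/-! ### Auxiliary lemmas -/

section Aux

variable {f a b h : V3 → ℂ} {p : V3} {j : Fin 3} {c : ℂ}

lemma contDiff_pd (hf : ContDiff ℝ 2 f) (j : Fin 3) : ContDiff ℝ 1 (pd j f) := by
  have h1 : ContDiff ℝ 1 (fderiv ℝ f) := hf.fderiv_right (by norm_num)
  exact h1.clm_apply contDiff_const

lemma contDiff_wz (hf : ContDiff ℝ 2 f) : ContDiff ℝ 1 (wz f) :=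
  ((contDiff_pd hf 0).sub (contDiff_const.mul (contDiff_pd hf 1))).div_const 2

lemma contDiff_wzb (hf : ContDiff ℝ 2 f) : ContDiff ℝ 1 (wzb f) :=
  ((contDiff_pd hf 0).add (contDiff_const.mul (contDiff_pd hf 1))).div_const 2

lemma contDiff_du (hf : ContDiff ℝ 2 f) : ContDiff ℝ 1 (du f) := contDiff_pd hf 2

lemma pd_add (ha : DifferentiableAt ℝ a p) (hb : DifferentiableAt ℝ b p) :
    pd j (fun q => a q + b q) p = pd j a p + pd j b p := by
  simp [pd, fderiv_fun_add ha hb]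

lemma pd_sub (ha : DifferentiableAt ℝ a p) (hb : DifferentiableAt ℝ b p) :
    pd j (fun q => a q - b q) p = pd j a p - pd j b p := by
  simp [pd, fderiv_fun_sub ha hb]

lemma pd_mul (ha : DifferentiableAt ℝ a p) (hb : DifferentiableAt ℝ b p) :
    pd j (fun q => a q * b q) p = pd j a p * b p + a p * pd j b p := by
  simp [pd, fderiv_fun_mul ha hb, smul_eq_mul]
  ring

lemma pd_const_mul (ha : DifferentiableAt ℝ a p) (c : ℂ) :
    pd j (fun q => c * a q) p = c * pd j a p := by
  simp [pd, fderiv_const_mul ha c]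

lemma pd_neg : pd j (fun q => -(a q)) p = -pd j a p := by
  simp [pd, fderiv_neg]

lemma pd_const_add (c : ℂ) :
    pd j (fun q => c + a q) p = pd j a p := by
  simp [pd, fderiv_const_add]

lemma pd_div_const (ha : DifferentiableAt ℝ a p) (c : ℂ) :
    pd j (fun q => a q / c) p = pd j a p / c := by
  have h : (fun q => a q / c) = fun q => c⁻¹ * a q := by
    funext q; rw [div_eq_mul_inv, mul_comm]
  rw [h, pd_const_mul ha, mul_comm, ← div_eq_mul_inv]

lemma pd_conj (ha : DifferentiableAt ℝ a p) :
    pd j (fun q => conj (a q)) p = conj (pd j a p) := by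
  have H : HasFDerivAt (fun q => conj (a q))
      ((Complex.conjCLE : ℂ →L[ℝ] ℂ).comp (fderiv ℝ a p)) p :=
    ((Complex.conjCLE : ℂ →L[ℝ] ℂ).hasFDerivAt).comp p ha.hasFDerivAt
  simp [pd, H.fderiv]

lemma diff_conj (ha : DifferentiableAt ℝ a p) :
    DifferentiableAt ℝ (fun q => conj (a q)) p := by
  have H : HasFDerivAt (fun q => conj (a q))
      ((Complex.conjCLE : ℂ →L[ℝ] ℂ).comp (fderiv ℝ a p)) p :=
    ((Complex.conjCLE : ℂ →L[ℝ] ℂ).hasFDerivAt).comp p ha.hasFDerivAt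
  exact H.differentiableAt

lemma pd_inv (hh : DifferentiableAt ℝ h p) (hz : h p ≠ 0) :
    pd j (fun q => (h q)⁻¹) p = -pd j h p / h p ^ 2 := by
  have H : HasFDerivAt (fun q => (h q)⁻¹)
      ((-ContinuousLinearMap.mulLeftRight ℝ ℂ (h p)⁻¹ (h p)⁻¹).comp (fderiv ℝ h p)) p :=
    (hasFDerivAt_inv' hz).comp p hh.hasFDerivAt
  show fderiv ℝ (fun q => (h q)⁻¹) p (Pi.single j 1) = _
  rw [H.fderiv]
  rw [ContinuousLinearMap.comp_apply, ContinuousLinearMap.neg_apply,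
    ContinuousLinearMap.mulLeftRight_apply]
  simp only [pd]
  rw [eq_div_iff (pow_ne_zero 2 hz)]
  field_simp

lemma pd_comm (hf : ContDiff ℝ 2 f) (i j : Fin 3) (p : V3) :
    pd i (pd j f) p = pd j (pd i f) p := by
  have h1 : ContDiff ℝ 1 (fderiv ℝ f) := hf.fderiv_right (by norm_num)
  have hd : DifferentiableAt ℝ (fderiv ℝ f) p := (h1.differentiable one_ne_zero) p
  have hsymm := (hf.contDiffAt (x := p)).isSymmSndFDerivAt (by norm_num)
  show fderiv ℝ (fun q => fderiv ℝ f q (Pi.single j 1)) p (Pi.single i 1)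
     = fderiv ℝ (fun q => fderiv ℝ f q (Pi.single i 1)) p (Pi.single j 1)
  rw [fderiv_clm_apply hd (differentiableAt_const _),
      fderiv_clm_apply hd (differentiableAt_const _)]
  simp [hsymm (Pi.single i 1) (Pi.single j 1)]

/-! operator-level rules -/

lemma wz_add (ha : DifferentiableAt ℝ a p) (hb : DifferentiableAt ℝ b p) :
    wz (fun q => a q + b q) p = wz a p + wz b p := by
  simp only [wz, pd_add ha hb]; ring

lemma wzb_add (ha : DifferentiableAt ℝ a p) (hb : DifferentiableAt ℝ b p) :
    wzb (fun q => a q + b q) p = wzb a p + wzb b p := by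
  simp only [wzb, pd_add ha hb]; ring

lemma du_add (ha : DifferentiableAt ℝ a p) (hb : DifferentiableAt ℝ b p) :
    du (fun q => a q + b q) p = du a p + du b p := by
  simp only [du, pd_add ha hb]

lemma wz_mul (ha : DifferentiableAt ℝ a p) (hb : DifferentiableAt ℝ b p) :
    wz (fun q => a q * b q) p = wz a p * b p + a p * wz b p := by
  simp only [wz, pd_mul ha hb]; ring

lemma wzb_mul (ha : DifferentiableAt ℝ a p) (hb : DifferentiableAt ℝ b p) :
    wzb (fun q => a q * b q) p = wzb a p * b p + a p * wzb b p := by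
  simp only [wzb, pd_mul ha hb]; ring

lemma du_mul (ha : DifferentiableAt ℝ a p) (hb : DifferentiableAt ℝ b p) :
    du (fun q => a q * b q) p = du a p * b p + a p * du b p := by
  simp only [du, pd_mul ha hb]

lemma wz_neg : wz (fun q => -(a q)) p = -wz a p := by
  simp only [wz, pd_neg]; ring

lemma wzb_neg : wzb (fun q => -(a q)) p = -wzb a p := by
  simp only [wzb, pd_neg]; ring

lemma du_neg : du (fun q => -(a q)) p = -du a p := by
  simp only [du, pd_neg]

lemma wz_const_add (c : ℂ) : wz (fun q => c + a q) p = wz a p := by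
  simp only [wz, pd_const_add]

lemma wzb_const_add (c : ℂ) : wzb (fun q => c + a q) p = wzb a p := by
  simp only [wzb, pd_const_add]

lemma du_const_add (c : ℂ) : du (fun q => c + a q) p = du a p := by
  simp only [du, pd_const_add]

lemma wz_inv (hh : DifferentiableAt ℝ h p) (hz : h p ≠ 0) :
    wz (fun q => (h q)⁻¹) p = -wz h p / h p ^ 2 := by
  simp only [wz, pd_inv hh hz]; ring

lemma wzb_inv (hh : DifferentiableAt ℝ h p) (hz : h p ≠ 0) :
    wzb (fun q => (h q)⁻¹) p = -wzb h p / h p ^ 2 := by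
  simp only [wzb, pd_inv hh hz]; ring

lemma du_inv (hh : DifferentiableAt ℝ h p) (hz : h p ≠ 0) :
    du (fun q => (h q)⁻¹) p = -du h p / h p ^ 2 := by
  simp only [du, pd_inv hh hz]

lemma wz_conj (ha : DifferentiableAt ℝ a p) :
    wz (fun q => conj (a q)) p = conj (wzb a p) := by
  simp only [wz, wzb, pd_conj ha, map_div₀, map_add, map_mul, Complex.conj_I, map_ofNat]
  ring

lemma wzb_conj (ha : DifferentiableAt ℝ a p) :
    wzb (fun q => conj (a q)) p = conj (wz a p) := by
  simp only [wz, wzb, pd_conj ha, map_div₀, map_sub, map_mul, Complex.conj_I, map_ofNat]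
  ring

lemma du_conj (ha : DifferentiableAt ℝ a p) :
    du (fun q => conj (a q)) p = conj (du a p) := by
  simp only [du, pd_conj ha]

/-! second-order commutation -/

lemma pd_wz (hf : ContDiff ℝ 2 f) (j : Fin 3) (p : V3) :
    pd j (wz f) p = (pd j (pd 0 f) p - I * pd j (pd 1 f) p) / 2 := by
  have h0 : DifferentiableAt ℝ (pd 0 f) p := ((contDiff_pd hf 0).differentiable one_ne_zero) p
  have h1 : DifferentiableAt ℝ (pd 1 f) p := ((contDiff_pd hf 1).differentiable one_ne_zero) p
  show pd j (fun q => (pd 0 f q - I * pd 1 f q) / 2) p = _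
  rw [pd_div_const (a := fun q => pd 0 f q - I * pd 1 f q) (h0.sub (h1.const_mul I)), pd_sub h0 (h1.const_mul I), pd_const_mul h1 I]

lemma pd_wzb (hf : ContDiff ℝ 2 f) (j : Fin 3) (p : V3) :
    pd j (wzb f) p = (pd j (pd 0 f) p + I * pd j (pd 1 f) p) / 2 := by
  have h0 : DifferentiableAt ℝ (pd 0 f) p := ((contDiff_pd hf 0).differentiable one_ne_zero) p
  have h1 : DifferentiableAt ℝ (pd 1 f) p := ((contDiff_pd hf 1).differentiable one_ne_zero) p
  show pd j (fun q => (pd 0 f q + I * pd 1 f q) / 2) p = _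
  rw [pd_div_const (a := fun q => pd 0 f q + I * pd 1 f q) (h0.add (h1.const_mul I)), pd_add h0 (h1.const_mul I), pd_const_mul h1 I]

lemma wz_du_comm (hf : ContDiff ℝ 2 f) (p : V3) : wz (du f) p = du (wz f) p := by
  show (pd 0 (pd 2 f) p - I * pd 1 (pd 2 f) p) / 2 = pd 2 (wz f) p
  rw [pd_wz hf 2 p, pd_comm hf 0 2, pd_comm hf 1 2]

lemma wzb_du_comm (hf : ContDiff ℝ 2 f) (p : V3) : wzb (du f) p = du (wzb f) p := by
  show (pd 0 (pd 2 f) p + I * pd 1 (pd 2 f) p) / 2 = pd 2 (wzb f) p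
  rw [pd_wzb hf 2 p, pd_comm hf 0 2, pd_comm hf 1 2]

lemma wz_wzb_comm (hf : ContDiff ℝ 2 f) (p : V3) : wz (wzb f) p = wzb (wz f) p := by
  show (pd 0 (wzb f) p - I * pd 1 (wzb f) p) / 2
     = (pd 0 (wz f) p + I * pd 1 (wz f) p) / 2
  rw [pd_wzb hf 0 p, pd_wzb hf 1 p, pd_wz hf 0 p, pd_wz hf 1 p, pd_comm hf 0 1]
  ring

end Aux

set_option maxHeartbeats 4000000 in
/-- For `φ : ℝ³ → ℝ` of class `C²`, one has `i·(L(L̄ f) − L̄(L f)) = ℓ · f_u` for every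
`C²` function `f : ℝ³ → ℂ`, and moreover `ℓ` is real-valued. -/
theorem class_I_bracket_LLbar (φ : V3 → ℝ) (hφ : ContDiff ℝ 2 φ) :
    (∀ f : V3 → ℂ, ContDiff ℝ 2 f → ∀ p,
        I * (Lop φ (Lbop φ f) p - Lbop φ (Lop φ f) p) = ell φ p * du f p) ∧
    (∀ p, ell φ p = conj (ell φ p)) := by
  have hclφ : ContDiff ℝ 2 (cl φ) := Complex.ofRealCLM.contDiff.comp hφ
  have hG : ContDiff ℝ 1 (wz (cl φ)) := contDiff_wz hclφ
  have hGb : ContDiff ℝ 1 (wzb (cl φ)) := contDiff_wzb hclφ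
  have hU : ContDiff ℝ 1 (du (cl φ)) := contDiff_du hclφ
  have hreal : ∀ (j : Fin 3) p, ∃ r : ℝ, pd j (cl φ) p = (r : ℂ) := by
    intro j p
    have hd : DifferentiableAt ℝ φ p := (hφ.differentiable two_ne_zero) p
    have H : HasFDerivAt (cl φ) (Complex.ofRealCLM.comp (fderiv ℝ φ p)) p :=
      (Complex.ofRealCLM.hasFDerivAt).comp p hd.hasFDerivAt
    exact ⟨fderiv ℝ φ p (Pi.single j 1), by simp [pd, H.fderiv]⟩
  have hUr : ∀ p, ∃ r : ℝ, du (cl φ) p = (r : ℂ) := fun p => hreal 2 p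
  have hconjG : ∀ p, conj (wz (cl φ) p) = wzb (cl φ) p := by
    intro p
    obtain ⟨r0, h0⟩ := hreal 0 p
    obtain ⟨r1, h1⟩ := hreal 1 p
    simp only [wz, wzb, h0, h1, map_div₀, map_sub, map_mul, Complex.conj_I,
      Complex.conj_ofReal, map_ofNat]
    ring
  have hconjGb : ∀ p, conj (wzb (cl φ) p) = wz (cl φ) p := by
    intro p; rw [← hconjG p]; exact Complex.conj_conj _
  have hconjU : ∀ p, conj (du (cl φ) p) = du (cl φ) p := by
    intro p; obtain ⟨r, hr⟩ := hUr p; rw [hr, Complex.conj_ofReal]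
  have hGfun : (fun q => conj (wz (cl φ) q)) = wzb (cl φ) := funext hconjG
  have hUfun : (fun q => conj (du (cl φ) q)) = du (cl φ) := funext hconjU
  have hconjQ : ∀ p, conj (du (wz (cl φ)) p) = du (wzb (cl φ)) p := by
    intro p
    rw [← du_conj ((hG.differentiable one_ne_zero) p), hGfun]
  have hconjQb : ∀ p, conj (du (wzb (cl φ)) p) = du (wz (cl φ)) p := by
    intro p; rw [← hconjQ p]; exact Complex.conj_conj _
  have hconjR : ∀ p, conj (du (du (cl φ)) p) = du (du (cl φ)) p := by
    intro p
    rw [← du_conj ((hU.differentiable one_ne_zero) p), hUfun]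
  have hconjP : ∀ p, conj (wzb (wz (cl φ)) p) = wzb (wz (cl φ)) p := by
    intro p
    rw [← wz_conj ((hG.differentiable one_ne_zero) p), hGfun, wz_wzb_comm hclφ]
  have hden : ∀ p, (I + du (cl φ) p) ≠ 0 := by
    intro p h
    obtain ⟨r, hr⟩ := hUr p
    rw [hr] at h
    have := congrArg Complex.im h
    simp at this
  constructor
  · intro f hf p
    -- differentiability facts
    have hGd : DifferentiableAt ℝ (wz (cl φ)) p := (hG.differentiable one_ne_zero) p
    have hUd : DifferentiableAt ℝ (du (cl φ)) p := (hU.differentiable one_ne_zero) p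
    have hAeq : Afun φ = fun q => -(wz (cl φ) q) * (I + du (cl φ) q)⁻¹ := by
      funext q; simp [Afun, div_eq_mul_inv]
    have hdenD : Differentiable ℝ (fun q => I + du (cl φ) q) :=
      (differentiable_const _).add (hU.differentiable one_ne_zero)
    have hinvD : Differentiable ℝ (fun q => (I + du (cl φ) q)⁻¹) :=
      hdenD.inv hden
    have hAdiff : Differentiable ℝ (Afun φ) := by
      rw [hAeq]; exact ((hG.differentiable one_ne_zero).neg).mul hinvD
    have hAbdiff : ∀ q, DifferentiableAt ℝ (fun q => conj (Afun φ q)) q :=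
      fun q => diff_conj (hAdiff q)
    have hwzf : DifferentiableAt ℝ (wz f) p := ((contDiff_wz hf).differentiable one_ne_zero) p
    have hwzbf : DifferentiableAt ℝ (wzb f) p := ((contDiff_wzb hf).differentiable one_ne_zero) p
    have hduf : DifferentiableAt ℝ (du f) p := ((contDiff_du hf).differentiable one_ne_zero) p
    -- derivatives of A
    have hwzbA : wzb (Afun φ) p =
        (-(wzb (wz (cl φ)) p) * (I + du (cl φ) p) + wz (cl φ) p * du (wzb (cl φ)) p)
          / (I + du (cl φ) p) ^ 2 := by
      rw [hAeq]
      rw [wzb_mul (a := fun q => -(wz (cl φ) q)) (hGd.neg) (hinvD p), wzb_neg, wzb_inv (hdenD p) (hden p),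
        wzb_const_add, wzb_du_comm hclφ]
      field_simp [hden p]
    have hduA : du (Afun φ) p =
        (-(du (wz (cl φ)) p) * (I + du (cl φ) p) + wz (cl φ) p * du (du (cl φ)) p)
          / (I + du (cl φ) p) ^ 2 := by
      rw [hAeq]
      rw [du_mul (a := fun q => -(wz (cl φ) q)) (hGd.neg) (hinvD p), du_neg, du_inv (hdenD p) (hden p), du_const_add]
      field_simp [hden p]
    -- expansions
    have e1 : wz (Lbop φ f) p =
        wz (wzb f) p + (conj (wzb (Afun φ) p) * du f p + conj (Afun φ p) * wz (du f) p) := by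
      show wz (fun q => wzb f q + conj (Afun φ q) * du f q) p = _
      rw [wz_add (b := fun q => conj (Afun φ q) * du f q) hwzbf ((hAbdiff p).mul hduf), wz_mul (hAbdiff p) hduf,
        wz_conj (hAdiff p)]
    have e2 : du (Lbop φ f) p =
        du (wzb f) p + (conj (du (Afun φ) p) * du f p + conj (Afun φ p) * du (du f) p) := by
      show du (fun q => wzb f q + conj (Afun φ q) * du f q) p = _
      rw [du_add (b := fun q => conj (Afun φ q) * du f q) hwzbf ((hAbdiff p).mul hduf), du_mul (hAbdiff p) hduf,
        du_conj (hAdiff p)]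
    have e3 : wzb (Lop φ f) p =
        wzb (wz f) p + (wzb (Afun φ) p * du f p + Afun φ p * wzb (du f) p) := by
      show wzb (fun q => wz f q + Afun φ q * du f q) p = _
      rw [wzb_add (b := fun q => Afun φ q * du f q) hwzf ((hAdiff p).mul hduf), wzb_mul (hAdiff p) hduf]
    have e4 : du (Lop φ f) p =
        du (wz f) p + (du (Afun φ) p * du f p + Afun φ p * du (du f) p) := by
      show du (fun q => wz f q + Afun φ q * du f q) p = _
      rw [du_add (b := fun q => Afun φ q * du f q) hwzf ((hAdiff p).mul hduf), du_mul (hAdiff p) hduf]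
    rw [show Lop φ (Lbop φ f) p
        = wz (Lbop φ f) p + Afun φ p * du (Lbop φ f) p from rfl,
      show Lbop φ (Lop φ f) p
        = wzb (Lop φ f) p + conj (Afun φ p) * du (Lop φ f) p from rfl,
      e1, e2, e3, e4, wz_wzb_comm hf, wz_du_comm hf, wzb_du_comm hf]
    obtain ⟨r, hr⟩ := hUr p
    have hz1 : (I + (r : ℂ)) ≠ 0 := by
      intro h; have := congrArg Complex.im h; simp at this
    have hz3 : (1 + ((r : ℂ)) ^ 2) ≠ 0 := by
      have h4 : (1 + ((r : ℂ)) ^ 2) = (((1 + r ^ 2 : ℝ)) : ℂ) := by push_cast; ring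
      rw [h4]
      exact_mod_cast (by positivity : (1 : ℝ) + r ^ 2 ≠ 0)
    have hA : Afun φ p = -(wz (cl φ) p) / (I + (r : ℂ)) := by
      simp [Afun, hr]
    have hA2 : Afun φ p = -(wz (cl φ) p) * ((r : ℂ) - I) / (1 + (r : ℂ) ^ 2) := by
      rw [hA, div_eq_div_iff hz1 hz3]
      linear_combination (-(wz (cl φ) p)) * Complex.I_sq
    have hwzbA2 : wzb (Afun φ) p =
        (-(wzb (wz (cl φ)) p) * (I + (r : ℂ)) + wz (cl φ) p * du (wzb (cl φ)) p)
          * ((r : ℂ) - I) ^ 2 / (1 + (r : ℂ) ^ 2) ^ 2 := by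
      rw [hwzbA, hr, div_eq_div_iff (pow_ne_zero 2 hz1) (pow_ne_zero 2 hz3)]
      linear_combination ((-(wzb (wz (cl φ)) p) * (I + (r : ℂ))
        + wz (cl φ) p * du (wzb (cl φ)) p) * (1 + 2 * (r : ℂ) ^ 2 - I ^ 2)) * Complex.I_sq
    have hduA2 : du (Afun φ) p =
        (-(du (wz (cl φ)) p) * (I + (r : ℂ)) + wz (cl φ) p * du (du (cl φ)) p)
          * ((r : ℂ) - I) ^ 2 / (1 + (r : ℂ) ^ 2) ^ 2 := by
      rw [hduA, hr, div_eq_div_iff (pow_ne_zero 2 hz1) (pow_ne_zero 2 hz3)]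
      linear_combination ((-(du (wz (cl φ)) p) * (I + (r : ℂ))
        + wz (cl φ) p * du (du (cl φ)) p) * (1 + 2 * (r : ℂ) ^ 2 - I ^ 2)) * Complex.I_sq
    rw [hwzbA2, hduA2]
    simp only [ell, hA2, hr, map_div₀, map_add, map_sub, map_mul, map_neg, map_pow,
      map_one, Complex.conj_I, Complex.conj_ofReal, map_ofNat, hconjG p, hconjGb p,
      hconjQ p, hconjQb p, hconjR p, hconjP p]
    have h2 : (I : ℂ) ^ 2 = -1 := Complex.I_sq
    have h3 : (I : ℂ) ^ 3 = -I := by rw [pow_succ, h2]; ring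
    have h4 : (I : ℂ) ^ 4 = 1 := by rw [pow_succ, h3]; simp [Complex.I_mul_I]
    have h5 : (I : ℂ) ^ 5 = I := by rw [pow_succ, h4]; ring
    have h6 : (I : ℂ) ^ 6 = -1 := by rw [pow_succ, h5]; simp [Complex.I_mul_I]
    have h7 : (I : ℂ) ^ 7 = -I := by rw [pow_succ, h6]; ring
    have h8 : (I : ℂ) ^ 8 = 1 := by rw [pow_succ, h7]; simp [Complex.I_mul_I]
    have h9 : (I : ℂ) ^ 9 = I := by rw [pow_succ, h8]; ring
    have h10 : (I : ℂ) ^ 10 = -1 := by rw [pow_succ, h9]; simp [Complex.I_mul_I]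
    have h11 : (I : ℂ) ^ 11 = -I := by rw [pow_succ, h10]; ring
    have h12 : (I : ℂ) ^ 12 = 1 := by rw [pow_succ, h11]; simp [Complex.I_mul_I]
    have h13 : (I : ℂ) ^ 13 = I := by rw [pow_succ, h12]; ring
    have h14 : (I : ℂ) ^ 14 = -1 := by rw [pow_succ, h13]; simp [Complex.I_mul_I]
    field_simp [hz3]
    ring_nf
    simp only [h14, h13, h12, h11, h10, h9, h8, h7, h6, h5, h4, h3, h2]
    ring
  · intro p
    simp only [ell, map_div₀, map_add, map_sub, map_mul, map_pow, map_one,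
      Complex.conj_I, map_ofNat, hconjG p, hconjGb p, hconjQ p, hconjQb p,
      hconjR p, hconjP p, hconjU p]
    ring

end
end
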